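/- Let n ≥ 2 and let k be a natural number with 2 · 3^k < n. In step k of Bruck's pattern on a ring of n nodes, every node r sends one message clockwise to r + 3^k and one clockwise to r + 2·3^k. For every v ∈ ZMod n, the total number of these 2n messages traversing the directed clockwise edge from v to v+1 is exactly 3^k + 2·3^k = 3^(k+1); that is, the cardinality of { (r, t) : r ∈ ZMod n, t ∈ {3^k, 2·3^k}, ∃ j < t, v = r + j } equals 3^(k+1). Hence Bruck's per-link congestion in step k is exactly three times that of Trivance in the same step, and the counterclockwise links carry no traffic. -/

import Mathlib

lemma bruck_aux (n : ℕ) (t : ℕ) (ht : t < n) (v : ZMod n) :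
    Set.ncard {rt : ZMod n × ℕ | rt.2 = t ∧ ∃ j < t, v = rt.1 + (j : ZMod n)} = t := by
  have hn : 0 < n := lt_of_le_of_lt (Nat.zero_le t) ht
  have : NeZero n := ⟨hn.ne'⟩
  have hset : {rt : ZMod n × ℕ | rt.2 = t ∧ ∃ j < t, v = rt.1 + (j : ZMod n)} =
      (fun j : ℕ => ((v - (j : ZMod n), t) : ZMod n × ℕ)) '' ↑(Finset.Iio t) := by
    ext ⟨r, s⟩
    simp only [Set.mem_setOf_eq, Set.mem_image, Finset.coe_Iio, Set.mem_Iio, Prod.mk.injEq]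
    constructor
    · rintro ⟨rfl, j, hj, rfl⟩
      exact ⟨j, hj, by ring, rfl⟩
    · rintro ⟨j, hj, rfl, rfl⟩
      exact ⟨rfl, j, hj, by ring⟩
  rw [hset, Set.ncard_image_of_injOn, Set.ncard_coe_finset, Nat.card_Iio]
  intro a ha b hb hab
  simp only [Finset.coe_Iio, Set.mem_Iio] at ha hb
  have h1 : v - (a : ZMod n) = v - (b : ZMod n) := congrArg Prod.fst hab
  have h2 : (a : ZMod n) = b := sub_right_injective h1
  have := congrArg ZMod.val h2
  rwa [ZMod.val_natCast_of_lt (ha.trans ht), ZMod.val_natCast_of_lt (hb.trans ht)] at this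

/-- **Bruck's link congestion.** On a ring of `n ≥ 2` nodes with `2 · 3^k < n`,
in step `k` of Bruck's pattern every node `r` sends one message clockwise to
`r + 3^k` and one clockwise to `r + 2·3^k`. For every directed clockwise edge
from `v` to `v + 1`, the number of these `2n` messages traversing it is exactly
`3^k + 2·3^k = 3^(k+1)`: Bruck's per-link congestion is three times that of
Trivance in the same step, while the counterclockwise links carry no traffic. -/
theorem bruck_congestion (n : ℕ) (hn : 2 ≤ n) (k : ℕ) (hk : 2 * 3 ^ k < n)
    (v : ZMod n) :
    Set.ncard {rt : ZMod n × ℕ |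
        rt.2 ∈ ({3 ^ k, 2 * 3 ^ k} : Set ℕ) ∧ ∃ j < rt.2, v = rt.1 + (j : ZMod n)} =
      3 ^ (k + 1) := by
  have : NeZero n := ⟨by omega⟩
  set a := 3 ^ k with ha
  have hapos : 0 < a := Nat.pow_pos (by norm_num)
  have ha1 : a < n := lt_of_le_of_lt (by omega) hk
  have hsplit : {rt : ZMod n × ℕ |
        rt.2 ∈ ({a, 2 * a} : Set ℕ) ∧ ∃ j < rt.2, v = rt.1 + (j : ZMod n)} =
      {rt : ZMod n × ℕ | rt.2 = a ∧ ∃ j < a, v = rt.1 + (j : ZMod n)} ∪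
      {rt : ZMod n × ℕ | rt.2 = 2 * a ∧ ∃ j < 2 * a, v = rt.1 + (j : ZMod n)} := by
    ext ⟨r, s⟩
    simp only [Set.mem_setOf_eq, Set.mem_insert_iff, Set.mem_singleton_iff, Set.mem_union]
    constructor
    · rintro ⟨rfl | rfl, j, hj, hv⟩
      · exact Or.inl ⟨rfl, j, hj, hv⟩
      · exact Or.inr ⟨rfl, j, hj, hv⟩
    · rintro (⟨rfl, j, hj, hv⟩ | ⟨rfl, j, hj, hv⟩)
      · exact ⟨Or.inl rfl, j, hj, hv⟩
      · exact ⟨Or.inr rfl, j, hj, hv⟩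
  have c1 := bruck_aux n a ha1 v
  have c2 := bruck_aux n (2 * a) hk v
  have hfin1 : {rt : ZMod n × ℕ | rt.2 = a ∧ ∃ j < a, v = rt.1 + (j : ZMod n)}.Finite := by
    apply Set.Finite.subset (Set.finite_univ.prod (Set.finite_Iic a))
    rintro ⟨r, s⟩ ⟨h1, _⟩
    exact Set.mem_prod.2 ⟨trivial, h1.le⟩
  have hfin2 : {rt : ZMod n × ℕ | rt.2 = 2 * a ∧ ∃ j < 2 * a, v = rt.1 + (j : ZMod n)}.Finite := by
    apply Set.Finite.subset (Set.finite_univ.prod (Set.finite_Iic (2 * a)))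
    rintro ⟨r, s⟩ ⟨h1, _⟩
    exact Set.mem_prod.2 ⟨trivial, h1.le⟩
  have hdisj : Disjoint {rt : ZMod n × ℕ | rt.2 = a ∧ ∃ j < a, v = rt.1 + (j : ZMod n)}
      {rt : ZMod n × ℕ | rt.2 = 2 * a ∧ ∃ j < 2 * a, v = rt.1 + (j : ZMod n)} := by
    rw [Set.disjoint_left]
    rintro ⟨r, s⟩ ⟨h1, _⟩ ⟨h2, _⟩
    omega
  rw [hsplit, Set.ncard_union_eq hdisj hfin1 hfin2, c1, c2]
  ring
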